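/- If κ is a cardinal such that there exists a maximal independent family of subsets of ℕ of cardinality κ, then there exists a densely maximal independent family of subsets of ℕ of cardinality κ. -/

import Mathlib

open Set

/-- A family of subsets of ℕ is *independent* if all its members are infinite and
for all finite disjoint subfamilies `𝒜, ℬ ⊆ I` the set `⋂ 𝒜 \ ⋃ ℬ` is infinite. -/
def Indep (I : Set (Set ℕ)) : Prop :=
  (∀ A ∈ I, A.Infinite) ∧
  ∀ 𝒜 ℬ : Finset (Set ℕ), ↑𝒜 ⊆ I → ↑ℬ ⊆ I → Disjoint 𝒜 ℬ →
    ((⋂ A ∈ 𝒜, A) \ (⋃ B ∈ ℬ, B)).Infinite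

/-- `FF I h` : `h` is a finite partial function from `I` to `2`, coded as a finitely
supported `Option Bool`-valued function whose support consists of members of `I`. -/
def FF (I : Set (Set ℕ)) (h : Set ℕ → Option Bool) : Prop :=
  {A | h A ≠ none}.Finite ∧ ∀ A : Set ℕ, h A ≠ none → A ∈ I

/-- The Boolean combination `I^h` : intersection over the domain of `h` of `A` (if
`h A = some false`, i.e. `h(A) = 0`) or of its complement (if `h A = some true`). -/
def BC (h : Set ℕ → Option Bool) : Set ℕ :=
  ⋂ A ∈ {A : Set ℕ | h A ≠ none}, (if h A = some false then A else Aᶜ)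

/-- `ExtFF h h'` : the finite partial function `h'` extends `h`. -/
def ExtFF (h h' : Set ℕ → Option Bool) : Prop :=
  ∀ (A : Set ℕ) (b : Bool), h A = some b → h' A = some b

/-- `I` is densely maximal: for every infinite `X ⊆ ℕ` and every `h ∈ FF(I)` there is
`h' ⊇ h` in `FF(I)` with `I^{h'} \ X` finite or `I^{h'} ∩ X` finite. -/
def DenselyMax (I : Set (Set ℕ)) : Prop :=
  ∀ X : Set ℕ, X.Infinite → ∀ h, FF I h →
    ∃ h', FF I h' ∧ ExtFF h h' ∧ ((BC h' \ X).Finite ∨ (BC h' ∩ X).Finite)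

/-- The density filter `fil(I)`. -/
def densityFil (I : Set (Set ℕ)) : Set (Set ℕ) :=
  {X | ∀ h, FF I h → ∃ h', FF I h' ∧ ExtFF h h' ∧ (BC h' \ X).Finite}

/-- `I` is a maximal independent family. -/
def MaxIndep (I : Set (Set ℕ)) : Prop :=
  Indep I ∧ ¬ ∃ X : Set ℕ, X.Infinite ∧ X ∉ I ∧ Indep (insert X I)

/-- A proper filter on ℕ, viewed as a collection of subsets of ℕ. -/
def ProperFilter (F : Set (Set ℕ)) : Prop :=
  ∅ ∉ F ∧ Set.univ ∈ F ∧ (∀ X ∈ F, ∀ Y : Set ℕ, X ⊆ Y → Y ∈ F) ∧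
    ∀ X ∈ F, ∀ Y ∈ F, X ∩ Y ∈ F

/-- Every member of `F` has infinite intersection with every Boolean combination of `I`. -/
def DiagProp (I : Set (Set ℕ)) (F : Set (Set ℕ)) : Prop :=
  ∀ X ∈ F, ∀ h, FF I h → (X ∩ BC h).Infinite

/-- `F` is a diagonalization filter for `I` : a proper filter, maximal under inclusion
among proper filters all of whose members meet every Boolean combination infinitely. -/
def DiagFilter (I F : Set (Set ℕ)) : Prop :=
  ProperFilter F ∧ DiagProp I F ∧
    ∀ G : Set (Set ℕ), ProperFilter G → DiagProp I G → F ⊆ G → G = F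

/-- `F` is a P-filter (as a collection of sets): every countable subfamily has a
pseudointersection in `F`. -/
def IsPFilter (F : Set (Set ℕ)) : Prop :=
  ∀ A : ℕ → Set ℕ, (∀ n, A n ∈ F) → ∃ B ∈ F, ∀ n, (B \ A n).Finite

/-- `F` is a Q-filter: every partition of ℕ into finite sets has a semiselector in `F`. -/
def IsQFilter (F : Set (Set ℕ)) : Prop :=
  ∀ J : ℕ → Set ℕ, (∀ n, (J n).Finite) → (∀ m n, m ≠ n → Disjoint (J m) (J n)) →
    (⋃ n, J n) = Set.univ → ∃ A ∈ F, ∀ n, (A ∩ J n).Subsingleton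

/-- An independent family is selective if it is densely maximal and its density filter
is Ramsey (both a P-filter and a Q-filter). -/
def Selective (I : Set (Set ℕ)) : Prop :=
  Indep I ∧ DenselyMax I ∧ IsPFilter (densityFil I) ∧ IsQFilter (densityFil I)

section AuxBasic

attribute [local instance] Classical.propDecidable

lemma mem_BC {h : Set ℕ → Option Bool} {x : ℕ} :
    x ∈ BC h ↔ ∀ A : Set ℕ, (h A = some false → x ∈ A) ∧ (h A = some true → x ∉ A) := by
  unfold BC
  simp only [Set.mem_iInter, Set.mem_setOf_eq]
  constructor
  · intro H A
    constructor
    · intro hf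
      have := H A (by simp [hf])
      rwa [if_pos hf] at this
    · intro ht
      have := H A (by simp [ht])
      rw [if_neg (by simp [ht])] at this
      exact this
  · intro H A hA
    rcases hb : h A with _ | b
    · exact absurd hb hA
    · cases b
      · simpa using (H A).1 hb
      · simpa using (H A).2 hb

lemma BC_anti {h h' : Set ℕ → Option Bool} (e : ExtFF h h') : BC h' ⊆ BC h := by
  intro x hx
  rw [mem_BC] at hx ⊢
  intro A
  exact ⟨fun hf => (hx A).1 (e A false hf), fun ht => (hx A).2 (e A true ht)⟩

lemma BC_empty : BC (fun _ => none) = Set.univ := by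
  ext x; simp [mem_BC]

lemma FF_empty (I : Set (Set ℕ)) : FF I (fun _ => none) := by
  constructor
  · simp
  · simp

/-- From an FF condition, the combination as a `Finset` combination. -/
lemma BC_infinite {I : Set (Set ℕ)} (hI : Indep I) {h : Set ℕ → Option Bool}
    (hh : FF I h) : (BC h).Infinite := by
  have h0 : {A | h A = some false}.Finite :=
    hh.1.subset (by intro A hA; simp_all)
  have h1 : {A | h A = some true}.Finite :=
    hh.1.subset (by intro A hA; simp_all)
  have hd : Disjoint h0.toFinset h1.toFinset := by
    rw [Finset.disjoint_left]
    intro A hA hA'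
    simp only [Set.Finite.mem_toFinset, Set.mem_setOf_eq] at hA hA'
    simp [hA] at hA'
  have := hI.2 h0.toFinset h1.toFinset
    (by intro A hA; simp only [Finset.coe_sort_coe, Set.Finite.coe_toFinset,
        Set.mem_setOf_eq] at hA; exact hh.2 A (by simp [hA]))
    (by intro A hA; simp only [Finset.coe_sort_coe, Set.Finite.coe_toFinset,
        Set.mem_setOf_eq] at hA; exact hh.2 A (by simp [hA])) hd
  convert this using 1
  ext x
  simp only [Set.mem_diff, Set.mem_iInter, Set.mem_iUnion, Set.Finite.mem_toFinset,
    Set.mem_setOf_eq, mem_BC, not_exists]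
  constructor
  · intro H
    exact ⟨fun A hA => (H A).1 hA, fun A hA hx => (H A).2 hA hx⟩
  · intro ⟨H1, H2⟩ A
    exact ⟨fun hf => H1 A hf, fun ht hx => H2 A ht hx⟩

/-- Incompatibility of two conditions. -/
def Incomp (g₁ g₂ : Set ℕ → Option Bool) : Prop :=
  ∃ (A : Set ℕ) (b₁ b₂ : Bool), g₁ A = some b₁ ∧ g₂ A = some b₂ ∧ b₁ ≠ b₂

lemma Incomp_disjoint {g₁ g₂ : Set ℕ → Option Bool} (h : Incomp g₁ g₂) :
    BC g₁ ∩ BC g₂ = ∅ := by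
  obtain ⟨A, b₁, b₂, h1, h2, hne⟩ := h
  ext x
  simp only [Set.mem_inter_iff, Set.mem_empty_iff_false, iff_false, not_and]
  intro hx1 hx2
  rw [mem_BC] at hx1 hx2
  cases b₁ <;> cases b₂ <;> simp_all
  · exact ((hx2 A).2 h2) ((hx1 A).1 h1)
  · exact ((hx1 A).2 h1) ((hx2 A).1 h2)

lemma Incomp_mono {g₁ g₂ g₁' : Set ℕ → Option Bool} (h : Incomp g₁ g₂)
    (e : ExtFF g₁ g₁') : Incomp g₁' g₂ := by
  obtain ⟨A, b₁, b₂, h1, h2, hne⟩ := h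
  exact ⟨A, b₁, b₂, e A b₁ h1, h2, hne⟩

lemma not_Incomp_of_ext {g g' : Set ℕ → Option Bool} (e : ExtFF g g') :
    ¬ Incomp g g' := by
  rintro ⟨A, b₁, b₂, h1, h2, hne⟩
  rw [e A b₁ h1] at h2
  exact hne (Option.some_injective _ h2)

/-- Union of two compatible conditions. -/
noncomputable def unionFF (g₁ g₂ : Set ℕ → Option Bool) : Set ℕ → Option Bool :=
  fun A => match g₁ A with
  | some b => some b
  | none => g₂ A

lemma unionFF_ext_left (g₁ g₂ : Set ℕ → Option Bool) : ExtFF g₁ (unionFF g₁ g₂) := by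
  intro A b hb
  simp [unionFF, hb]

lemma unionFF_ext_right {g₁ g₂ : Set ℕ → Option Bool} (hc : ¬ Incomp g₁ g₂) :
    ExtFF g₂ (unionFF g₁ g₂) := by
  intro A b hb
  unfold unionFF
  rcases h1 : g₁ A with _ | b₁
  · simp [hb]
  · simp only []
    by_contra hne
    exact hc ⟨A, b₁, b, h1, hb, by intro h; exact hne (by rw [h])⟩

lemma unionFF_FF {I : Set (Set ℕ)} {g₁ g₂ : Set ℕ → Option Bool}
    (h1 : FF I g₁) (h2 : FF I g₂) : FF I (unionFF g₁ g₂) := by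
  constructor
  · apply (h1.1.union h2.1).subset
    intro A hA
    simp only [Set.mem_setOf_eq, unionFF] at hA ⊢
    rcases hb : g₁ A with _ | b
    · right; rw [hb] at hA; exact hA
    · left; simp [hb]
  · intro A hA
    simp only [unionFF] at hA
    rcases hb : g₁ A with _ | b
    · rw [hb] at hA; exact h2.2 A hA
    · exact h1.2 A (by simp [hb])

end AuxBasic

section AuxTwo

attribute [local instance] Classical.propDecidable

/-- The condition with a single entry. -/
noncomputable def singleFF (B : Set ℕ) (b : Bool) : Set ℕ → Option Bool :=
  fun A => if A = B then some b else none

lemma singleFF_FF {I : Set (Set ℕ)} {B : Set ℕ} (hB : B ∈ I) (b : Bool) :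
    FF I (singleFF B b) := by
  constructor
  · apply (Set.finite_singleton B).subset
    intro A hA
    simp only [Set.mem_setOf_eq, singleFF] at hA
    by_contra hne
    simp only [Set.mem_singleton_iff] at hne
    rw [if_neg hne] at hA; exact hA rfl
  · intro A hA
    simp only [singleFF] at hA
    by_cases hAB : A = B
    · rw [hAB]; exact hB
    · rw [if_neg hAB] at hA; exact absurd rfl hA

lemma BC_singleFF_false (B : Set ℕ) : BC (singleFF B false) = B := by
  ext x
  rw [mem_BC]
  constructor
  · intro H; exact (H B).1 (by simp [singleFF])
  · intro hx A
    constructor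
    · intro hf
      simp only [singleFF] at hf
      by_cases hAB : A = B
      · rwa [hAB]
      · rw [if_neg hAB] at hf; exact absurd hf (by simp)
    · intro ht
      simp only [singleFF] at ht
      by_cases hAB : A = B
      · rw [if_pos hAB] at ht; exact absurd ht (by simp)
      · rw [if_neg hAB] at ht; exact absurd ht (by simp)

lemma BC_singleFF_true (B : Set ℕ) : BC (singleFF B true) = Bᶜ := by
  ext x
  rw [mem_BC]
  constructor
  · intro H; exact (H B).2 (by simp [singleFF])
  · intro hx A
    constructor
    · intro hf
      simp only [singleFF] at hf
      by_cases hAB : A = B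
      · rw [if_pos hAB] at hf; exact absurd hf (by simp)
      · rw [if_neg hAB] at hf; exact absurd hf (by simp)
    · intro ht
      simp only [singleFF] at ht
      by_cases hAB : A = B
      · rwa [hAB]
      · rw [if_neg hAB] at ht; exact absurd ht (by simp)

/-- Extending a condition by one fresh entry. -/
noncomputable def extOne (h : Set ℕ → Option Bool) (B : Set ℕ) (b : Bool) :
    Set ℕ → Option Bool :=
  fun A => if A = B then some b else h A

lemma extOne_FF {I : Set (Set ℕ)} {h : Set ℕ → Option Bool} (hh : FF I h)
    {B : Set ℕ} (hB : B ∈ I) (b : Bool) : FF I (extOne h B b) := by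
  constructor
  · apply (hh.1.union (Set.finite_singleton B)).subset
    intro A hA
    simp only [Set.mem_setOf_eq, extOne, Set.mem_union, Set.mem_singleton_iff] at hA ⊢
    by_cases hAB : A = B
    · right; exact hAB
    · left; rw [if_neg hAB] at hA; exact hA
  · intro A hA
    simp only [extOne] at hA
    by_cases hAB : A = B
    · rw [hAB]; exact hB
    · rw [if_neg hAB] at hA; exact hh.2 A hA

lemma extOne_ext {h : Set ℕ → Option Bool} {B : Set ℕ} (hB : h B = none) (b : Bool) :
    ExtFF h (extOne h B b) := by
  intro A b' hb'
  simp only [extOne]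
  by_cases hAB : A = B
  · rw [hAB] at hb'; rw [hb'] at hB; exact absurd hB (by simp)
  · rw [if_neg hAB]; exact hb'

lemma BC_extOne {h : Set ℕ → Option Bool} {B : Set ℕ} (hB : h B = none) (b : Bool) :
    BC (extOne h B b) = (if b then Bᶜ else B) ∩ BC h := by
  ext x
  simp only [Set.mem_inter_iff, mem_BC]
  constructor
  · intro H
    refine ⟨?_, fun A => ⟨fun hf => ?_, fun ht => ?_⟩⟩
    · cases b
      · simpa using (H B).1 (by simp [extOne])
      · simpa using (H B).2 (by simp [extOne])
    · by_cases hAB : A = B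
      · rw [hAB, hB] at hf; exact absurd hf (by simp)
      · exact (H A).1 (by simp [extOne, hAB, hf])
    · by_cases hAB : A = B
      · rw [hAB, hB] at ht; exact absurd ht (by simp)
      · exact (H A).2 (by simp [extOne, hAB, ht])
  · intro ⟨hxB, H⟩ A
    constructor
    · intro hf
      simp only [extOne] at hf
      by_cases hAB : A = B
      · rw [if_pos hAB] at hf
        cases b
        · rw [hAB]; simpa using hxB
        · exact absurd hf (by simp)
      · rw [if_neg hAB] at hf; exact (H A).1 hf
    · intro ht
      simp only [extOne] at ht
      by_cases hAB : A = B
      · rw [if_pos hAB] at ht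
        cases b
        · exact absurd ht (by simp)
        · rw [hAB]; simpa using hxB
      · rw [if_neg hAB] at ht; exact (H A).2 ht

/-- The condition coding a pair of disjoint finsets. -/
noncomputable def finsetFF (𝒜 ℬ : Finset (Set ℕ)) : Set ℕ → Option Bool :=
  fun A => if A ∈ 𝒜 then some false else if A ∈ ℬ then some true else none

lemma finsetFF_FF {I : Set (Set ℕ)} {𝒜 ℬ : Finset (Set ℕ)}
    (h𝒜 : ↑𝒜 ⊆ I) (hℬ : ↑ℬ ⊆ I) : FF I (finsetFF 𝒜 ℬ) := by
  constructor
  · apply (𝒜.finite_toSet.union ℬ.finite_toSet).subset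
    intro A hA
    simp only [Set.mem_setOf_eq, finsetFF] at hA
    simp only [Set.mem_union, Finset.mem_coe]
    by_cases h1 : A ∈ 𝒜
    · left; exact h1
    · right
      rw [if_neg h1] at hA
      by_contra h2
      rw [if_neg h2] at hA; exact hA rfl
  · intro A hA
    simp only [finsetFF] at hA
    by_cases h1 : A ∈ 𝒜
    · exact h𝒜 h1
    · rw [if_neg h1] at hA
      by_cases h2 : A ∈ ℬ
      · exact hℬ h2
      · rw [if_neg h2] at hA; exact absurd rfl hA

lemma BC_finsetFF {𝒜 ℬ : Finset (Set ℕ)} (hd : Disjoint 𝒜 ℬ) :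
    BC (finsetFF 𝒜 ℬ) = (⋂ A ∈ 𝒜, A) \ (⋃ B ∈ ℬ, B) := by
  ext x
  simp only [Set.mem_diff, Set.mem_iInter, Set.mem_iUnion, not_exists, mem_BC]
  constructor
  · intro H
    constructor
    · intro A hA
      exact (H A).1 (by simp [finsetFF, hA])
    · intro B hB hx
      have hB' : B ∉ 𝒜 := Finset.disjoint_right.mp hd hB
      exact (H B).2 (by simp [finsetFF, hB', hB]) hx
  · intro ⟨H1, H2⟩ A
    constructor
    · intro hf
      simp only [finsetFF] at hf
      by_cases h1 : A ∈ 𝒜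
      · exact H1 A h1
      · rw [if_neg h1] at hf
        by_cases h2 : A ∈ ℬ
        · rw [if_pos h2] at hf; exact absurd hf (by simp)
        · rw [if_neg h2] at hf; exact absurd hf (by simp)
    · intro ht
      simp only [finsetFF] at ht
      by_cases h1 : A ∈ 𝒜
      · rw [if_pos h1] at ht; exact absurd ht (by simp)
      · rw [if_neg h1] at ht
        by_cases h2 : A ∈ ℬ
        · exact H2 A h2
        · rw [if_neg h2] at ht; exact absurd ht (by simp)

end AuxTwo

section PartB

attribute [local instance] Classical.propDecidable

/-- Conditions below which some set is everywhere undecided. -/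
def UndecD (I : Set (Set ℕ)) : Set (Set ℕ → Option Bool) :=
  {g | FF I g ∧ ∃ X : Set ℕ, ∀ g', FF I g' → ExtFF g g' →
        (BC g' ∩ X).Infinite ∧ (BC g' \ X).Infinite}

/-- Either there is a condition `h` below which every set is decided densely, or
we contradict maximality. -/
lemma exists_DM {I : Set (Set ℕ)} (hmax : MaxIndep I) :
    ∃ h, FF I h ∧ ∀ (X : Set ℕ) g, FF I g → ExtFF h g →
      ∃ g', FF I g' ∧ ExtFF g g' ∧ ((BC g' ∩ X).Finite ∨ (BC g' \ X).Finite) := by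
  by_contra hcon
  push_neg at hcon
  -- density of UndecD
  have hDense : ∀ h, FF I h → ∃ g ∈ UndecD I, ExtFF h g := by
    intro h hh
    obtain ⟨X, g, hg, hext, hforall⟩ := hcon h hh
    refine ⟨g, ⟨hg, X, ?_⟩, hext⟩
    intro g' hg' hext'
    obtain ⟨h1, h2⟩ := hforall g' hg' hext'
    exact ⟨h1, h2⟩
  -- Zorn: maximal pairwise incompatible subfamily of UndecD
  have hZorn : ∃ G, Maximal (· ∈ {G : Set (Set ℕ → Option Bool) |
      G ⊆ UndecD I ∧ ∀ g₁ ∈ G, ∀ g₂ ∈ G, g₁ ≠ g₂ → Incomp g₁ g₂}) G := by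
    apply zorn_subset
    intro c hc hchain
    refine ⟨⋃₀ c, ⟨?_, ?_⟩, fun s hs => Set.subset_sUnion_of_mem hs⟩
    · intro g hg
      obtain ⟨G, hG, hgG⟩ := hg
      exact (hc hG).1 hgG
    · intro g₁ hg₁ g₂ hg₂ hne
      obtain ⟨G₁, hG₁, h1⟩ := hg₁
      obtain ⟨G₂, hG₂, h2⟩ := hg₂
      rcases hchain.total hG₁ hG₂ with hsub | hsub
      · exact (hc hG₂).2 g₁ (hsub h1) g₂ h2 hne
      · exact (hc hG₁).2 g₁ h1 g₂ (hsub h2) hne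
  obtain ⟨G, hG⟩ := hZorn
  have hGD : G ⊆ UndecD I := hG.prop.1
  have hGinc : ∀ g₁ ∈ G, ∀ g₂ ∈ G, g₁ ≠ g₂ → Incomp g₁ g₂ := hG.prop.2
  -- the chosen undecided sets
  let Xof : (Set ℕ → Option Bool) → Set ℕ := fun g =>
    if hg : g ∈ UndecD I then Classical.choose hg.2 else ∅
  have hXof : ∀ g ∈ UndecD I, ∀ g', FF I g' → ExtFF g g' →
      (BC g' ∩ Xof g).Infinite ∧ (BC g' \ Xof g).Infinite := by
    intro g hg g' hg' hext
    have := Classical.choose_spec hg.2 g' hg' hext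
    simpa only [Xof, dif_pos hg] using this
  let Xs : Set ℕ := ⋃ g ∈ G, (Xof g ∩ BC g)
  -- main claim : Xs splits every Boolean combination
  have main : ∀ γ, FF I γ → (BC γ ∩ Xs).Infinite ∧ (BC γ \ Xs).Infinite := by
    intro γ hγ
    -- find a compatible member of G
    have hcompat : ∃ g ∈ G, ¬ Incomp γ g := by
      by_contra hall
      push_neg at hall
      obtain ⟨gg, hggD, hggext⟩ := hDense γ hγ
      have hggG : gg ∉ G := by
        intro hmem
        exact not_Incomp_of_ext hggext (hall gg hmem)
      have : insert gg G ∈ {G : Set (Set ℕ → Option Bool) |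
          G ⊆ UndecD I ∧ ∀ g₁ ∈ G, ∀ g₂ ∈ G, g₁ ≠ g₂ → Incomp g₁ g₂} := by
        constructor
        · intro g hg
          rcases hg with rfl | hg
          · exact hggD
          · exact hGD hg
        · intro g₁ hg₁ g₂ hg₂ hne
          rcases hg₁ with rfl | hg₁ <;> rcases hg₂ with rfl | hg₂
          · exact absurd rfl hne
          · exact Incomp_mono (hall g₂ hg₂) hggext
          · -- g₁ ∈ G, g₂ = gg : symmetric
            obtain ⟨A, b₁, b₂, e1, e2, hb⟩ := Incomp_mono (hall g₁ hg₁) hggext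
            exact ⟨A, b₂, b₁, e2, e1, fun h => hb h.symm⟩
          · exact hGinc g₁ hg₁ g₂ hg₂ hne
      have := hG.eq_of_subset this (Set.subset_insert _ _)
      exact hggG (by rw [this]; exact Set.mem_insert _ _)
    obtain ⟨g, hgG, hcomp⟩ := hcompat
    have hgD : g ∈ UndecD I := hGD hgG
    -- δ = γ ∪ g
    set δ := unionFF γ g with hδdef
    have hδFF : FF I δ := unionFF_FF hγ (hgD.1)
    have hδγ : ExtFF γ δ := unionFF_ext_left γ g
    have hδg : ExtFF g δ := unionFF_ext_right hcomp
    have hBCδγ : BC δ ⊆ BC γ := BC_anti hδγ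
    have hBCδg : BC δ ⊆ BC g := BC_anti hδg
    obtain ⟨hsplit1, hsplit2⟩ := hXof g hgD δ hδFF hδg
    -- BC δ ∩ Xs = BC δ ∩ Xof g
    have hkey : BC δ ∩ Xs = BC δ ∩ Xof g := by
      apply Set.Subset.antisymm
      · rintro x ⟨hxδ, hxXs⟩
        rw [show Xs = ⋃ g ∈ G, (Xof g ∩ BC g) from rfl] at hxXs
        simp only [Set.mem_iUnion, Set.mem_inter_iff, exists_prop] at hxXs
        obtain ⟨g', hg'G, hx1, hx2⟩ := hxXs
        by_cases hgg : g' = g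
        · exact ⟨hxδ, hgg ▸ hx1⟩
        · exfalso
          have hinc : Incomp g g' := hGinc g hgG g' hg'G (fun h => hgg h.symm)
          have : x ∈ BC g ∩ BC g' := ⟨hBCδg hxδ, hx2⟩
          rw [Incomp_disjoint hinc] at this
          exact this
      · rintro x ⟨hxδ, hxX⟩
        refine ⟨hxδ, ?_⟩
        simp only [Xs, Set.mem_iUnion, Set.mem_inter_iff, exists_prop]
        exact ⟨g, hgG, hxX, hBCδg hxδ⟩
    constructor
    · apply hsplit1.mono
      intro x hx
      have hx' : x ∈ BC δ ∩ Xs := hkey ▸ hx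
      exact ⟨hBCδγ hx'.1, hx'.2⟩
    · apply (hsplit2.mono _)
      intro x hx
      rcases hx with ⟨hx1, hx2⟩
      refine ⟨hBCδγ hx1, ?_⟩
      intro hxXs
      have : x ∈ BC δ ∩ Xof g := hkey ▸ (⟨hx1, hxXs⟩ : x ∈ BC δ ∩ Xs)
      exact hx2 this.2
  -- derive the contradiction with maximality
  have hXsInf : Xs.Infinite := by
    have := (main (fun _ => none) (FF_empty I)).1
    rw [BC_empty, Set.univ_inter] at this
    exact this
  have hXsNotI : Xs ∉ I := by
    intro hmem
    have := (main (singleFF Xs true) (singleFF_FF hmem true)).1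
    rw [BC_singleFF_true] at this
    simp at this
  apply hmax.2
  refine ⟨Xs, hXsInf, hXsNotI, ?_, ?_⟩
  · intro A hA
    rcases hA with rfl | hA
    · exact hXsInf
    · exact hmax.1.1 A hA
  · intro 𝒜 ℬ h𝒜 hℬ hd
    by_cases h1 : Xs ∈ 𝒜
    · have hℬI : ↑ℬ ⊆ I := by
        intro B hB
        rcases hℬ hB with rfl | hB'
        · exact absurd (Finset.disjoint_left.mp hd h1) (by simpa using hB)
        · exact hB'
      have h𝒜'I : ↑(𝒜.erase Xs) ⊆ I := by
        intro A hA
        simp only [Finset.coe_erase, Set.mem_diff, Finset.mem_coe,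
          Set.mem_singleton_iff] at hA
        rcases h𝒜 hA.1 with rfl | hA'
        · exact absurd rfl hA.2
        · exact hA'
      have hd' : Disjoint (𝒜.erase Xs) ℬ := hd.mono_left (Finset.erase_subset _ _)
      have hmain := (main (finsetFF (𝒜.erase Xs) ℬ) (finsetFF_FF h𝒜'I hℬI)).1
      rw [BC_finsetFF hd'] at hmain
      apply hmain.mono
      intro x hx
      obtain ⟨⟨hx1, hx2⟩, hx3⟩ := hx
      constructor
      · rw [Set.mem_iInter₂]
        intro A hA
        by_cases hAX : A = Xs
        · exact hAX ▸ hx3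
        · exact (Set.mem_iInter₂.mp hx1) A (Finset.mem_erase.mpr ⟨hAX, hA⟩)
      · exact hx2
    · by_cases h2 : Xs ∈ ℬ
      · have h𝒜I : ↑𝒜 ⊆ I := by
          intro A hA
          rcases h𝒜 hA with rfl | hA'
          · exact absurd hA h1
          · exact hA'
        have hℬ'I : ↑(ℬ.erase Xs) ⊆ I := by
          intro B hB
          simp only [Finset.coe_erase, Set.mem_diff, Finset.mem_coe,
            Set.mem_singleton_iff] at hB
          rcases hℬ hB.1 with rfl | hB'
          · exact absurd rfl hB.2
          · exact hB'
        have hd' : Disjoint 𝒜 (ℬ.erase Xs) := hd.mono_right (Finset.erase_subset _ _)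
        have hmain := (main (finsetFF 𝒜 (ℬ.erase Xs)) (finsetFF_FF h𝒜I hℬ'I)).2
        rw [BC_finsetFF hd'] at hmain
        apply hmain.mono
        intro x hx
        obtain ⟨⟨hx1, hx2⟩, hx3⟩ := hx
        refine ⟨hx1, ?_⟩
        rw [Set.mem_iUnion₂]
        rintro ⟨B, hB, hxB⟩
        by_cases hBX : B = Xs
        · exact hx3 (hBX ▸ hxB)
        · exact hx2 (Set.mem_iUnion₂.mpr ⟨B, Finset.mem_erase.mpr ⟨hBX, hB⟩, hxB⟩)
      · have h𝒜I : ↑𝒜 ⊆ I := by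
          intro A hA
          rcases h𝒜 hA with rfl | hA'
          · exact absurd hA h1
          · exact hA'
        have hℬI : ↑ℬ ⊆ I := by
          intro B hB
          rcases hℬ hB with rfl | hB'
          · exact absurd hB h2
          · exact hB'
        exact hmax.1.2 𝒜 ℬ h𝒜I hℬI hd

end PartB

section PartD

attribute [local instance] Classical.propDecidable

lemma maxIndep_infinite {I : Set (Set ℕ)} (hmax : MaxIndep I) : I.Infinite := by
  by_contra hfin
  rw [Set.not_infinite] at hfin
  haveI : Finite ↥I := hfin
  -- the "color" of a natural number
  set φ : ℕ → (↥I → Prop) := fun n A => n ∈ (A : Set ℕ) with hφ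
  -- invariance of Boolean combinations over I
  have hinv : ∀ (𝒜 ℬ : Finset (Set ℕ)), ↑𝒜 ⊆ I → ↑ℬ ⊆ I →
      ∀ n ∈ (⋂ A ∈ 𝒜, A) \ (⋃ B ∈ ℬ, B), ∀ m, φ m = φ n →
        m ∈ (⋂ A ∈ 𝒜, A) \ (⋃ B ∈ ℬ, B) := by
    intro 𝒜 ℬ h𝒜 hℬ n hn m hm
    obtain ⟨hn1, hn2⟩ := hn
    constructor
    · rw [Set.mem_iInter₂] at hn1 ⊢
      intro A hA
      have := congrFun hm ⟨A, h𝒜 hA⟩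
      simp only [hφ] at this
      rw [this]
      exact hn1 A hA
    · rw [Set.mem_iUnion₂]
      rintro ⟨B, hB, hmB⟩
      apply hn2
      rw [Set.mem_iUnion₂]
      refine ⟨B, hB, ?_⟩
      have := congrFun hm ⟨B, hℬ hB⟩
      simp only [hφ] at this
      rw [← this]
      exact hmB
  -- every infinite invariant set contains an infinite fiber
  have hfib : ∀ S : Set ℕ, S.Infinite → (∀ n ∈ S, ∀ m, φ m = φ n → m ∈ S) →
      ∃ v : ↥I → Prop, {n | φ n = v}.Infinite ∧ {n | φ n = v} ⊆ S := by
    intro S hS hSinv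
    have hcover : S = ⋃ v : ↥I → Prop, (S ∩ {n | φ n = v}) := by
      ext n
      simp only [Set.mem_iUnion, Set.mem_inter_iff, Set.mem_setOf_eq]
      exact ⟨fun hn => ⟨φ n, hn, rfl⟩, fun ⟨v, hn, _⟩ => hn⟩
    have : ∃ v : ↥I → Prop, (S ∩ {n | φ n = v}).Infinite := by
      by_contra hall
      push_neg at hall
      apply hS
      rw [hcover]
      exact Set.finite_iUnion hall
    obtain ⟨v, hv⟩ := this
    refine ⟨v, hv.mono Set.inter_subset_right, ?_⟩
    obtain ⟨n, hnS, hnv⟩ := hv.nonempty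
    intro m hm
    exact hSinv n hnS m (by rw [Set.mem_setOf_eq] at hm hnv; rw [hm, hnv])
  -- the parity-splitting set
  set X : Set ℕ :=
    {n | ∃ v : ↥I → Prop, φ n = v ∧ Even (Nat.count (fun m => φ m = v) n)} with hX
  -- X splits every infinite fiber
  have hsplit : ∀ v : ↥I → Prop, {n | φ n = v}.Infinite →
      ({n | φ n = v} ∩ X).Infinite ∧ ({n | φ n = v} \ X).Infinite := by
    intro v hv
    have hmem : ∀ k, Nat.nth (fun m => φ m = v) k ∈ {n | φ n = v} :=
      fun k => Nat.nth_mem_of_infinite hv k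
    have hcount : ∀ k, Nat.count (fun m => φ m = v) (Nat.nth (fun m => φ m = v) k) = k :=
      fun k => Nat.count_nth_of_infinite hv k
    have hinj := Nat.nth_injective hv
    constructor
    · refine Set.infinite_of_injective_forall_mem
        (f := fun k => Nat.nth (fun m => φ m = v) (2 * k)) ?_ ?_
      · intro a b hab
        have := hinj hab
        omega
      · intro k
        refine ⟨hmem (2 * k), v, hmem (2 * k), ?_⟩
        rw [hcount (2 * k)]
        exact ⟨k, by ring⟩
    · refine Set.infinite_of_injective_forall_mem
        (f := fun k => Nat.nth (fun m => φ m = v) (2 * k + 1)) ?_ ?_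
      · intro a b hab
        have := hinj hab
        omega
      · intro k
        refine ⟨hmem (2 * k + 1), ?_⟩
        rintro ⟨v', hv', heven⟩
        have hmm := hmem (2 * k + 1)
        rw [Set.mem_setOf_eq] at hmm
        have hvv : v' = v := by rw [← hv', hmm]
        subst hvv
        rw [hcount (2 * k + 1)] at heven
        rcases heven with ⟨r, hr⟩
        omega
  -- X is not in I
  obtain ⟨v₀, hv₀, _⟩ := hfib Set.univ Set.infinite_univ (by intro n _ m _; trivial)
  have hXnotI : X ∉ I := by
    intro hXI
    obtain ⟨n, hn⟩ := (hsplit v₀ hv₀).1.nonempty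
    obtain ⟨m, hm⟩ := (hsplit v₀ hv₀).2.nonempty
    have h1 : φ n = v₀ := hn.1
    have h2 : φ m = v₀ := hm.1
    have hφnm : φ n = φ m := by rw [h1, h2]
    have hx := congrFun hφnm ⟨X, hXI⟩
    simp only [hφ] at hx
    exact hm.2 (by rw [← hx]; exact hn.2)
  -- X is infinite
  have hXinf : X.Infinite := ((hsplit v₀ hv₀).1.mono Set.inter_subset_right)
  -- insert X I is independent
  apply hmax.2
  refine ⟨X, hXinf, hXnotI, ?_, ?_⟩
  · intro A hA
    rcases hA with rfl | hA
    · exact hXinf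
    · exact hmax.1.1 A hA
  · intro 𝒜 ℬ h𝒜 hℬ hd
    by_cases h1 : X ∈ 𝒜
    · have hℬI : ↑ℬ ⊆ I := by
        intro B hB
        rcases hℬ hB with rfl | hB'
        · exact absurd (Finset.disjoint_left.mp hd h1) (by simpa using hB)
        · exact hB'
      have h𝒜'I : ↑(𝒜.erase X) ⊆ I := by
        intro A hA
        simp only [Finset.coe_erase, Set.mem_diff, Finset.mem_coe,
          Set.mem_singleton_iff] at hA
        rcases h𝒜 hA.1 with rfl | hA'
        · exact absurd rfl hA.2
        · exact hA'
      have hC : ((⋂ A ∈ 𝒜.erase X, A) \ (⋃ B ∈ ℬ, B)).Infinite :=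
        hmax.1.2 _ _ h𝒜'I hℬI (hd.mono_left (Finset.erase_subset _ _))
      obtain ⟨v, hvinf, hvsub⟩ := hfib _ hC (hinv _ _ h𝒜'I hℬI)
      apply ((hsplit v hvinf).1.mono _)
      rintro x ⟨hx1, hx2⟩
      obtain ⟨hx3, hx4⟩ := hvsub hx1
      constructor
      · rw [Set.mem_iInter₂]
        intro A hA
        by_cases hAX : A = X
        · exact hAX ▸ hx2
        · exact (Set.mem_iInter₂.mp hx3) A (Finset.mem_erase.mpr ⟨hAX, hA⟩)
      · exact hx4
    · by_cases h2 : X ∈ ℬ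
      · have h𝒜I : ↑𝒜 ⊆ I := by
          intro A hA
          rcases h𝒜 hA with rfl | hA'
          · exact absurd hA h1
          · exact hA'
        have hℬ'I : ↑(ℬ.erase X) ⊆ I := by
          intro B hB
          simp only [Finset.coe_erase, Set.mem_diff, Finset.mem_coe,
            Set.mem_singleton_iff] at hB
          rcases hℬ hB.1 with rfl | hB'
          · exact absurd rfl hB.2
          · exact hB'
        have hC : ((⋂ A ∈ 𝒜, A) \ (⋃ B ∈ ℬ.erase X, B)).Infinite :=
          hmax.1.2 _ _ h𝒜I hℬ'I (hd.mono_right (Finset.erase_subset _ _))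
        obtain ⟨v, hvinf, hvsub⟩ := hfib _ hC (hinv _ _ h𝒜I hℬ'I)
        apply ((hsplit v hvinf).2.mono _)
        rintro x ⟨hx1, hx2⟩
        obtain ⟨hx3, hx4⟩ := hvsub hx1
        refine ⟨hx3, ?_⟩
        rw [Set.mem_iUnion₂]
        rintro ⟨B, hB, hxB⟩
        by_cases hBX : B = X
        · exact hx2 (hBX ▸ hxB)
        · exact hx4 (Set.mem_iUnion₂.mpr ⟨B, Finset.mem_erase.mpr ⟨hBX, hB⟩, hxB⟩)
      · have h𝒜I : ↑𝒜 ⊆ I := by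
          intro A hA
          rcases h𝒜 hA with rfl | hA'
          · exact absurd hA h1
          · exact hA'
        have hℬI : ↑ℬ ⊆ I := by
          intro B hB
          rcases hℬ hB with rfl | hB'
          · exact absurd hB h2
          · exact hB'
        exact hmax.1.2 𝒜 ℬ h𝒜I hℬI hd

end PartD

section PartC

attribute [local instance] Classical.propDecidable

lemma ExtFF_trans {h₁ h₂ h₃ : Set ℕ → Option Bool} (e1 : ExtFF h₁ h₂)
    (e2 : ExtFF h₂ h₃) : ExtFF h₁ h₃ :=
  fun A b hb => e2 A b (e1 A b hb)

lemma unionFF_none {g₁ g₂ : Set ℕ → Option Bool} {A : Set ℕ} (hA : g₁ A = none) :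
    unionFF g₁ g₂ A = g₂ A := by
  simp [unionFF, hA]

lemma partC {I : Set (Set ℕ)} (hmax : MaxIndep I) {h : Set ℕ → Option Bool}
    (hh : FF I h)
    (hDM : ∀ (X : Set ℕ) g, FF I g → ExtFF h g →
      ∃ g', FF I g' ∧ ExtFF g g' ∧ ((BC g' ∩ X).Finite ∨ (BC g' \ X).Finite)) :
    ∃ J : Set (Set ℕ), Indep J ∧ DenselyMax J ∧ Cardinal.mk J = Cardinal.mk I := by
  have hI : Indep I := hmax.1
  have hIinf : I.Infinite := maxIndep_infinite hmax
  by_cases hdom : ∀ A, h A = none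
  · -- trivial case : the condition is empty, I itself is densely maximal
    refine ⟨I, hI, ?_, rfl⟩
    intro X _ g hg
    obtain ⟨g', hg', hext, hdec⟩ := hDM X g hg (fun A b hb => by rw [hdom A] at hb; cases hb)
    exact ⟨g', hg', hext, hdec.symm⟩
  · push_neg at hdom
    obtain ⟨A₀, hA₀⟩ := hdom
    set D₀ : Set ℕ := BC h with hD₀
    set J : Set (Set ℕ) := (fun A => A ∩ D₀) '' (I ∩ {A | h A = none}) with hJ
    -- injectivity of the trace map
    have hinj : Set.InjOn (fun A => A ∩ D₀) (I ∩ {A | h A = none}) := by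
      rintro A ⟨hAI, hAn⟩ A' ⟨hA'I, hA'n⟩ heq
      by_contra hne
      simp only [Set.mem_setOf_eq] at hAn hA'n
      have hfresh : extOne h A false A' = none := by
        simp only [extOne]
        rw [if_neg (fun hcon => hne hcon.symm)]
        exact hA'n
      have hFF : FF I (extOne (extOne h A false) A' true) :=
        extOne_FF (extOne_FF hh hAI false) hA'I true
      have hBC : BC (extOne (extOne h A false) A' true) = A'ᶜ ∩ (A ∩ D₀) := by
        rw [BC_extOne hfresh true, BC_extOne hAn false]
        simp [hD₀]
      have hinf := BC_infinite hI hFF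
      rw [hBC] at hinf
      simp only at heq
      rw [heq] at hinf
      apply hinf
      apply Set.Finite.subset (Set.finite_empty)
      rintro x ⟨hx1, hx2, _⟩
      exact hx1 hx2
    refine ⟨J, ?_, ?_, ?_⟩
    -- Independence of J
    · constructor
      · rintro T ⟨A, ⟨hAI, hAn⟩, rfl⟩
        simp only [Set.mem_setOf_eq] at hAn
        have := BC_infinite hI (extOne_FF hh hAI false)
        rwa [BC_extOne hAn false, if_neg (by simp)] at this
      · intro 𝒜 ℬ h𝒜 hℬ hd
        set pat : Set ℕ → Option Bool := fun A =>
          if A ∈ I ∧ h A = none ∧ A ∩ D₀ ∈ 𝒜 then some false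
          else if A ∈ I ∧ h A = none ∧ A ∩ D₀ ∈ ℬ then some true else none with hpat
        have hpatFF : FF I pat := by
          constructor
          · apply Set.Finite.of_finite_image (f := fun A => A ∩ D₀)
            · apply ((𝒜 ∪ ℬ).finite_toSet).subset
              rintro T ⟨A, hA, rfl⟩
              simp only [Set.mem_setOf_eq, hpat] at hA
              by_cases h1 : A ∈ I ∧ h A = none ∧ A ∩ D₀ ∈ 𝒜
              · simp only [Finset.coe_union, Set.mem_union, Finset.mem_coe]
                exact Or.inl h1.2.2
              · rw [if_neg h1] at hA
                by_cases h2 : A ∈ I ∧ h A = none ∧ A ∩ D₀ ∈ ℬ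
                · simp only [Finset.coe_union, Set.mem_union, Finset.mem_coe]
                  exact Or.inr h2.2.2
                · rw [if_neg h2] at hA; exact absurd rfl hA
            · apply hinj.mono
              intro A hA
              simp only [Set.mem_setOf_eq, hpat] at hA
              by_cases h1 : A ∈ I ∧ h A = none ∧ A ∩ D₀ ∈ 𝒜
              · exact ⟨h1.1, h1.2.1⟩
              · rw [if_neg h1] at hA
                by_cases h2 : A ∈ I ∧ h A = none ∧ A ∩ D₀ ∈ ℬ
                · exact ⟨h2.1, h2.2.1⟩
                · rw [if_neg h2] at hA; exact absurd rfl hA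
          · intro A hA
            simp only [hpat] at hA
            by_cases h1 : A ∈ I ∧ h A = none ∧ A ∩ D₀ ∈ 𝒜
            · exact h1.1
            · rw [if_neg h1] at hA
              by_cases h2 : A ∈ I ∧ h A = none ∧ A ∩ D₀ ∈ ℬ
              · exact h2.1
              · rw [if_neg h2] at hA; exact absurd rfl hA
        set γ := unionFF h pat with hγ
        have hγFF : FF I γ := unionFF_FF hh hpatFF
        have hγext : ExtFF h γ := unionFF_ext_left h pat
        apply (BC_infinite hI hγFF).mono
        intro x hx
        have hxD₀ : x ∈ D₀ := BC_anti hγext hx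
        constructor
        · rw [Set.mem_iInter₂]
          intro T hT
          obtain ⟨A, ⟨hAI, hAn⟩, rfl⟩ := h𝒜 hT
          simp only [Set.mem_setOf_eq] at hAn
          have hγA : γ A = some false := by
            rw [hγ, unionFF_none hAn]
            simp only [hpat]
            rw [if_pos ⟨hAI, hAn, hT⟩]
          exact ⟨(mem_BC.mp hx A).1 hγA, hxD₀⟩
        · rw [Set.mem_iUnion₂]
          rintro ⟨T, hT, hxT⟩
          obtain ⟨A, ⟨hAI, hAn⟩, rfl⟩ := hℬ hT
          simp only [Set.mem_setOf_eq] at hAn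
          have hT𝒜 : A ∩ D₀ ∉ 𝒜 := Finset.disjoint_right.mp hd hT
          have hγA : γ A = some true := by
            rw [hγ, unionFF_none hAn]
            simp only [hpat]
            rw [if_neg (fun hcon : A ∈ I ∧ h A = none ∧ A ∩ D₀ ∈ 𝒜 => hT𝒜 hcon.2.2),
              if_pos ⟨hAI, hAn, hT⟩]
          exact (mem_BC.mp hx A).2 hγA hxT.1
    -- Dense maximality of J
    · intro X _ g hg
      -- pull back g to a condition over I
      set pat' : Set ℕ → Option Bool := fun A =>
        if A ∈ I ∧ h A = none then g (A ∩ D₀) else none with hpat'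
      have hpat'FF : FF I pat' := by
        constructor
        · apply Set.Finite.of_finite_image (f := fun A => A ∩ D₀)
          · apply hg.1.subset
            rintro T ⟨A, hA, rfl⟩
            simp only [Set.mem_setOf_eq, hpat'] at hA
            by_cases h1 : A ∈ I ∧ h A = none
            · rw [if_pos h1] at hA; exact hA
            · rw [if_neg h1] at hA; exact absurd rfl hA
          · apply hinj.mono
            intro A hA
            simp only [Set.mem_setOf_eq, hpat'] at hA
            by_cases h1 : A ∈ I ∧ h A = none
            · exact h1
            · rw [if_neg h1] at hA; exact absurd rfl hA
        · intro A hA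
          simp only [hpat'] at hA
          by_cases h1 : A ∈ I ∧ h A = none
          · exact h1.1
          · rw [if_neg h1] at hA; exact absurd rfl hA
      set γ₀ := unionFF h pat' with hγ₀
      have hγ₀FF : FF I γ₀ := unionFF_FF hh hpat'FF
      have hγ₀ext : ExtFF h γ₀ := unionFF_ext_left h pat'
      obtain ⟨γ₁, hγ₁FF, hγ₁ext, hγ₁dec⟩ := hDM X γ₀ hγ₀FF hγ₀ext
      have hhγ₁ : ExtFF h γ₁ := ExtFF_trans hγ₀ext hγ₁ext
      -- a fresh member of I
      obtain ⟨B, hBI, hBn⟩ : ∃ B, B ∈ I ∧ γ₁ B = none := by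
        obtain ⟨B, hB⟩ := (hIinf.diff hγ₁FF.1).nonempty
        refine ⟨B, hB.1, ?_⟩
        by_contra hcon
        exact hB.2 hcon
      have hBh : h B = none := by
        rcases hb : h B with _ | b
        · rfl
        · rw [hhγ₁ B b hb] at hBn; cases hBn
      set γ₂ := extOne γ₁ B false with hγ₂
      have hγ₂FF : FF I γ₂ := extOne_FF hγ₁FF hBI false
      have hγ₂ext : ExtFF γ₁ γ₂ := extOne_ext hBn false
      have hhγ₂ : ExtFF h γ₂ := ExtFF_trans hhγ₁ hγ₂ext
      have hγ₂B : γ₂ B = some false := by simp [hγ₂, extOne]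
      have hγ₂dec : (BC γ₂ ∩ X).Finite ∨ (BC γ₂ \ X).Finite := by
        have hsub : BC γ₂ ⊆ BC γ₁ := BC_anti hγ₂ext
        rcases hγ₁dec with h1 | h1
        · exact Or.inl (h1.subset (fun x hx => ⟨hsub hx.1, hx.2⟩))
        · exact Or.inr (h1.subset (fun x hx => ⟨hsub hx.1, hx.2⟩))
      -- push γ₂ forward to a condition over J
      set g' : Set ℕ → Option Bool := fun T =>
        if hT : ∃ A, (A ∈ I ∧ h A = none) ∧ A ∩ D₀ = T then γ₂ hT.choose else none
        with hg'
      -- evaluation of g' on traces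
      have hg'eval : ∀ A, A ∈ I → h A = none → g' (A ∩ D₀) = γ₂ A := by
        intro A hAI hAn
        have hex : ∃ A', (A' ∈ I ∧ h A' = none) ∧ A' ∩ D₀ = A ∩ D₀ :=
          ⟨A, ⟨hAI, hAn⟩, rfl⟩
        have hspec := hex.choose_spec
        have : hex.choose = A :=
          hinj ⟨hspec.1.1, hspec.1.2⟩ ⟨hAI, hAn⟩ hspec.2
        rw [hg']
        simp only [dif_pos hex]
        rw [this]
      refine ⟨g', ⟨?_, ?_⟩, ?_, ?_⟩
      · -- finite support
        apply Set.Finite.subset ((hγ₂FF.1).image (fun A => A ∩ D₀))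
        intro T hT
        simp only [Set.mem_setOf_eq] at hT
        by_cases hex : ∃ A, (A ∈ I ∧ h A = none) ∧ A ∩ D₀ = T
        · obtain ⟨A, hA, rfl⟩ := hex
          rw [hg'eval A hA.1 hA.2] at hT
          exact ⟨A, hT, rfl⟩
        · exfalso
          apply hT
          simp only [hg']
          rw [dif_neg hex]
      · -- support in J
        intro T hT
        by_cases hex : ∃ A, (A ∈ I ∧ h A = none) ∧ A ∩ D₀ = T
        · obtain ⟨A, hA, hAT⟩ := hex
          exact ⟨A, ⟨hA.1, hA.2⟩, hAT⟩
        · exfalso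
          apply hT
          simp only [hg']
          rw [dif_neg hex]
      · -- ExtFF g g'
        intro T b hb
        have hTJ : T ∈ J := hg.2 T (by rw [hb]; simp)
        obtain ⟨A, ⟨hAI, hAn⟩, rfl⟩ := hTJ
        simp only [Set.mem_setOf_eq] at hAn
        rw [hg'eval A hAI hAn]
        have h1 : pat' A = some b := by
          simp only [hpat']
          rw [if_pos ⟨hAI, hAn⟩]; exact hb
        have h2 : γ₀ A = some b := by rw [hγ₀, unionFF_none hAn]; exact h1
        exact hγ₂ext A b (hγ₁ext A b h2)
      · -- decision, via BC g' = BC γ₂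
        have hBCeq : BC g' = BC γ₂ := by
          apply Set.Subset.antisymm
          · intro x hx
            have hxBD : x ∈ B ∩ D₀ := by
              have := (mem_BC.mp hx (B ∩ D₀)).1
              apply this
              rw [hg'eval B hBI hBh]
              exact hγ₂B
            have hxD : x ∈ D₀ := hxBD.2
            rw [mem_BC]
            intro A
            constructor
            · intro hf
              rcases hb : h A with _ | b
              · have hAI : A ∈ I := hγ₂FF.2 A (by rw [hf]; simp)
                have := (mem_BC.mp hx (A ∩ D₀)).1
                  (by rw [hg'eval A hAI hb]; exact hf)
                exact this.1
              · have : γ₂ A = some b := hhγ₂ A b hb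
                rw [hf] at this
                cases this
                exact (mem_BC.mp hxD A).1 hb
            · intro ht
              rcases hb : h A with _ | b
              · have hAI : A ∈ I := hγ₂FF.2 A (by rw [ht]; simp)
                have := (mem_BC.mp hx (A ∩ D₀)).2
                  (by rw [hg'eval A hAI hb]; exact ht)
                intro hxA
                exact this ⟨hxA, hxD⟩
              · have : γ₂ A = some b := hhγ₂ A b hb
                rw [ht] at this
                cases this
                exact (mem_BC.mp hxD A).2 hb
          · intro x hx
            have hxD : x ∈ D₀ := BC_anti hhγ₂ hx
            rw [mem_BC]
            intro T
            constructor
            · intro hf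
              by_cases hex : ∃ A, (A ∈ I ∧ h A = none) ∧ A ∩ D₀ = T
              · obtain ⟨A, hA, rfl⟩ := hex
                rw [hg'eval A hA.1 hA.2] at hf
                exact ⟨(mem_BC.mp hx A).1 hf, hxD⟩
              · exfalso
                have : g' T = none := by simp only [hg']; rw [dif_neg hex]
                rw [this] at hf; cases hf
            · intro ht
              by_cases hex : ∃ A, (A ∈ I ∧ h A = none) ∧ A ∩ D₀ = T
              · obtain ⟨A, hA, rfl⟩ := hex
                rw [hg'eval A hA.1 hA.2] at ht
                intro hxT
                exact (mem_BC.mp hx A).2 ht hxT.1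
              · exfalso
                have : g' T = none := by simp only [hg']; rw [dif_neg hex]
                rw [this] at ht; cases ht
        rw [hBCeq]
        exact hγ₂dec.symm
    -- cardinality
    · have h1 : Cardinal.mk J = Cardinal.mk (I ∩ {A | h A = none} : Set (Set ℕ)) := by
        rw [hJ]
        exact Cardinal.mk_image_eq_of_injOn _ _ hinj
      have hFsub : (I ∩ {A | h A ≠ none} : Set (Set ℕ)) ⊆ I := Set.inter_subset_left
      have hdiff : (I \ (I ∩ {A | h A ≠ none}) : Set (Set ℕ)) = I ∩ {A | h A = none} := by
        ext A
        simp only [Set.mem_diff, Set.mem_inter_iff, Set.mem_setOf_eq, not_and, not_not]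
        constructor
        · intro ⟨hA, hA2⟩
          exact ⟨hA, hA2 hA⟩
        · intro ⟨hA, hA2⟩
          exact ⟨hA, fun _ => hA2⟩
      have h2 := Cardinal.mk_diff_add_mk hFsub
      rw [hdiff] at h2
      have hinf2 : (I ∩ {A | h A = none} : Set (Set ℕ)).Infinite := by
        rw [← hdiff]
        exact hIinf.diff (hh.1.inter_of_right I)
      have hale : Cardinal.aleph0 ≤ Cardinal.mk (I ∩ {A | h A = none} : Set (Set ℕ)) := by
        rw [← Cardinal.infinite_iff]
        exact hinf2.to_subtype
      have hble : Cardinal.mk (I ∩ {A | h A ≠ none} : Set (Set ℕ)) ≤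
          Cardinal.mk (I ∩ {A | h A = none} : Set (Set ℕ)) := by
        refine le_trans ?_ hale
        exact le_of_lt ((hh.1.inter_of_right I).lt_aleph0)
      rw [h1, ← h2, Cardinal.add_eq_left hale hble]

end PartC


theorem statement15 (κ : Cardinal)
    (h : ∃ I : Set (Set ℕ), MaxIndep I ∧ Cardinal.mk I = κ) :
    ∃ J : Set (Set ℕ), Indep J ∧ DenselyMax J ∧ Cardinal.mk J = κ := by
  obtain ⟨I, hmax, hκ⟩ := h
  obtain ⟨h0, hh0, hDM⟩ := exists_DM hmax
  obtain ⟨J, h1, h2, h3⟩ := partC hmax hh0 hDM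
  exact ⟨J, h1, h2, by rw [h3, hκ]⟩
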